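/- Let G be a κ-normal group whose cardinality κ = |G| is a singular cardinal. Then for every finite partition G = A₁ ∪ … ∪ Aₙ of G, at least one cell Aᵢ is κ-large. -/

import Mathlib

open scoped Pointwise
open Cardinal

universe u

variable {G : Type u}

/-- `A` is left `κ`-large: `G = F * A` for some `F` with `|F| < κ`. -/
def LeftLarge [Group G] (κ : Cardinal.{u}) (A : Set G) : Prop :=
  ∃ F : Set G, #F < κ ∧ F * A = Set.univ

/-- `A` is right `κ`-large: `G = A * F` for some `F` with `|F| < κ`. -/
def RightLarge [Group G] (κ : Cardinal.{u}) (A : Set G) : Prop :=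
  ∃ F : Set G, #F < κ ∧ A * F = Set.univ

/-- `A` is `κ`-large: `G = F * A * F` for some `F` with `|F| < κ`. -/
def KLarge [Group G] (κ : Cardinal.{u}) (A : Set G) : Prop :=
  ∃ F : Set G, #F < κ ∧ F * A * F = Set.univ

/-- `A` is left `κ`-thick: for every `F` with `|F| < κ` there is `a ∈ A` with `F * a ⊆ A`. -/
def LeftThick [Group G] (κ : Cardinal.{u}) (A : Set G) : Prop :=
  ∀ F : Set G, #F < κ → ∃ a ∈ A, F * {a} ⊆ A

/-- `A` is right `κ`-thick: for every `F` with `|F| < κ` there is `a ∈ A` with `a * F ⊆ A`. -/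
def RightThick [Group G] (κ : Cardinal.{u}) (A : Set G) : Prop :=
  ∀ F : Set G, #F < κ → ∃ a ∈ A, {a} * F ⊆ A

/-- `A` is `κ`-thick: for every `F` with `|F| < κ` there is `a ∈ A` with `F * a * F ⊆ A`. -/
def KThick [Group G] (κ : Cardinal.{u}) (A : Set G) : Prop :=
  ∀ F : Set G, #F < κ → ∃ a ∈ A, F * {a} * F ⊆ A

/-- `G` is `κ`-normal: every subset of size `< κ` lies in a normal subgroup of size `< κ`. -/
def KNormal (G : Type u) [Group G] (κ : Cardinal.{u}) : Prop :=
  ∀ F : Set G, #F < κ → ∃ H : Subgroup G, H.Normal ∧ #(H : Set G) < κ ∧ F ⊆ (H : Set G)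

/-- `κ` is a singular cardinal: infinite, with cofinality strictly less than `κ`. -/
def Singular (κ : Cardinal.{u}) : Prop := ℵ₀ ≤ κ ∧ κ.ord.cof < κ

section Aux

variable [Group G] {κ : Cardinal.{u}}

/-- auxiliary thickness: contains a coset of every small normal subgroup. -/
def NThick [Group G] (κ : Cardinal.{u}) (B : Set G) : Prop :=
  ∀ H : Subgroup G, H.Normal → #(H : Set G) < κ → ∃ g : G, g • (H : Set G) ⊆ B

lemma exists_cover (hκ : #G = κ) (hinf : ℵ₀ ≤ κ) (hcof : κ.ord.cof < κ)
    (hnorm : KNormal G κ) :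
    ∃ (ι : Type u) (H : ι → Subgroup G), #ι < κ ∧ (∀ i, (H i).Normal) ∧
      (∀ i, #(H i : Set G) < κ) ∧ (⋃ i, (H i : Set G)) = Set.univ := by
  have hmk : #G = #(κ.ord.ToType) := by
    rw [hκ, Cardinal.mk_toType, Cardinal.card_ord]
  obtain ⟨e⟩ := Cardinal.eq.mp hmk
  obtain ⟨S, hSunb, hScard⟩ := Order.exists_cof_eq (α := κ.ord.ToType)
  rw [Ordinal.cof_toType] at hScard
  have hSlt : #S < κ := hScard ▸ hcof
  -- sets T b
  have hT : ∀ b : κ.ord.ToType, #(e ⁻¹' Set.Iic b) < κ := by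
    intro b
    refine lt_of_le_of_lt (Cardinal.mk_preimage_of_injective e _ e.injective) ?_
    have : (Set.Iic b) = insert b (Set.Iio b) := by
      ext x; simp [le_iff_lt_or_eq, or_comm]
    rw [this]
    refine lt_of_le_of_lt Cardinal.mk_insert_le ?_
    exact Cardinal.add_lt_of_lt hinf (Cardinal.mk_Iio_ord_toType b)
      (lt_of_lt_of_le Cardinal.one_lt_aleph0 hinf)
  choose Hf hHf using fun i : S => hnorm (e ⁻¹' Set.Iic i.1) (hT i.1)
  refine ⟨S, Hf, hSlt, fun i => (hHf i).1, fun i => (hHf i).2.1, ?_⟩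
  ext g
  simp only [Set.mem_iUnion, Set.mem_univ, iff_true]
  obtain ⟨b, hbS, hb⟩ := hSunb (e g)
  exact ⟨⟨b, hbS⟩, (hHf ⟨b, hbS⟩).2.2 (by simpa using hb)⟩

lemma nthick_klarge (hκ : #G = κ) (hinf : ℵ₀ ≤ κ) (hcof : κ.ord.cof < κ)
    (hnorm : KNormal G κ) {B : Set G} (hB : NThick κ B) : KLarge κ B := by
  obtain ⟨ι, H, hι, hn, hc, hcov⟩ := exists_cover hκ hinf hcof hnorm
  choose g hg using fun i => hB (H i) (hn i) (hc i)
  refine ⟨(Set.range fun i => (g i)⁻¹) ∪ {1}, ?_, ?_⟩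
  · refine lt_of_le_of_lt (Cardinal.mk_union_le _ _) ?_
    refine Cardinal.add_lt_of_lt hinf (lt_of_le_of_lt Cardinal.mk_range_le hι) ?_
    simpa using lt_of_lt_of_le Cardinal.one_lt_aleph0 hinf
  · apply Set.eq_univ_of_univ_subset
    intro x _
    have : x ∈ ⋃ i, (H i : Set G) := hcov ▸ Set.mem_univ x
    obtain ⟨i, hx⟩ := Set.mem_iUnion.mp this
    have hb : g i * x ∈ B := hg i ⟨x, hx, rfl⟩
    have : x = (g i)⁻¹ * (g i * x) * 1 := by group
    rw [this]
    exact Set.mul_mem_mul (Set.mul_mem_mul (Or.inl ⟨i, rfl⟩) hb) (Or.inr rfl)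

lemma key_induction (hinf : ℵ₀ ≤ κ) (hnorm : KNormal G κ) :
    ∀ (m : ℕ) (B : Fin m → Set G) (C : Set G), NThick κ C → C ⊆ ⋃ j, B j →
      ∃ (j : Fin m) (H : Subgroup G), H.Normal ∧ #(H : Set G) < κ ∧
        NThick κ ((H : Set G) * B j) := by
  intro m
  induction m with
  | zero =>
    intro B C hC hsub
    exfalso
    have hbot : #((⊥ : Subgroup G) : Set G) < κ := by
      simp only [Subgroup.coe_bot]
      exact lt_of_lt_of_le (by simpa using Cardinal.one_lt_aleph0) hinf
    obtain ⟨g, hg⟩ := hC ⊥ inferInstance hbot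
    have : g ∈ C := hg ⟨1, by simp, by simp⟩
    exact absurd (hsub this) (by simp)
  | succ m ih =>
    intro B C hC hsub
    by_cases h0 : ∃ H : Subgroup G, H.Normal ∧ #(H : Set G) < κ ∧
        NThick κ ((H : Set G) * B 0)
    · obtain ⟨H, h1, h2, h3⟩ := h0
      exact ⟨0, H, h1, h2, h3⟩
    push_neg at h0
    -- C \ B 0 is thick
    have hthick : NThick κ (C \ B 0) := by
      intro H hHn hHc
      have hnt : ¬ NThick κ ((H : Set G) * B 0) := h0 H hHn hHc
      simp only [NThick, not_forall] at hnt
      obtain ⟨K, hKn, hKc, hK⟩ := hnt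
      push_neg at hK
      obtain ⟨L, hLn, hLc, hLsub⟩ := hnorm ((H : Set G) ∪ (K : Set G))
        (lt_of_le_of_lt (Cardinal.mk_union_le _ _) (Cardinal.add_lt_of_lt hinf hHc hKc))
      obtain ⟨g, hg⟩ := hC L hLn hLc
      have hHL : (H : Set G) ⊆ (L : Set G) := fun x hx => hLsub (Or.inl hx)
      have hKL : (K : Set G) ⊆ (L : Set G) := fun x hx => hLsub (Or.inr hx)
      -- find l ∈ L with (g*l) • H disjoint from B 0
      by_cases hl : ∃ l ∈ (L : Set G), ∀ b ∈ B 0, b ∉ (g * l) • (H : Set G)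
      · obtain ⟨l, hlL, hdisj⟩ := hl
        refine ⟨g * l, fun x hx => ?_⟩
        obtain ⟨h, hh, rfl⟩ := hx
        constructor
        · apply hg
          exact ⟨l * h, L.mul_mem hlL (hHL hh), by simp [mul_assoc]⟩
        · intro hxB
          exact hdisj _ hxB ⟨h, hh, rfl⟩
      · exfalso
        push_neg at hl
        apply hK g
        intro x hx
        obtain ⟨k, hk, rfl⟩ := hx
        obtain ⟨b, hb, hbmem⟩ := hl k (hKL hk)
        obtain ⟨h, hh, hbe⟩ := hbmem
        -- b = g * k * h, so g * k = b * h⁻¹ = (b h⁻¹ b⁻¹) * b ∈ H * B 0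
        have hbe' : g * k * h = b := by simpa [smul_eq_mul] using hbe
        have hgk : g * k = b * h⁻¹ * b⁻¹ * b := by rw [← hbe']; group
        show g * k ∈ (H : Set G) * B 0
        rw [hgk]
        exact Set.mul_mem_mul (hHn.conj_mem _ (H.inv_mem hh) b) hb
    have hsub' : C \ B 0 ⊆ ⋃ j : Fin m, B j.succ := by
      intro x hx
      obtain ⟨j, hj⟩ := Set.mem_iUnion.mp (hsub hx.1)
      rcases Fin.eq_zero_or_eq_succ j with rfl | ⟨j', rfl⟩
      · exact absurd hj hx.2
      · exact Set.mem_iUnion.mpr ⟨j', hj⟩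
    obtain ⟨j, H, h1, h2, h3⟩ := ih (fun j => B j.succ) (C \ B 0) hthick hsub'
    exact ⟨j.succ, H, h1, h2, h3⟩

end Aux

/-- If `G` is a `κ`-normal group of singular cardinality `κ`, then
in any finite partition of `G` at least one cell is `κ`-large. -/
theorem exists_large_cell_of_finite_partition {G : Type u} [Group G]
    (κ : Cardinal.{u}) (hκ : #G = κ) (hsing : Singular κ) (hnorm : KNormal G κ)
    (n : ℕ) (A : Fin n → Set G) (hdisj : Pairwise (Function.onFun Disjoint A))
    (hcover : (⋃ i, A i) = Set.univ) :
    ∃ i, KLarge κ (A i) := by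
  obtain ⟨hinf, hcof⟩ := hsing
  have huniv : NThick κ (Set.univ : Set G) := fun H _ _ => ⟨1, fun x _ => trivial⟩
  obtain ⟨i, H, hHn, hHc, hthick⟩ := key_induction hinf hnorm n A Set.univ huniv
    (le_of_eq hcover.symm)
  obtain ⟨F, hF, hFeq⟩ := nthick_klarge hκ hinf hcof hnorm hthick
  refine ⟨i, F * (H : Set G) ∪ F, ?_, ?_⟩
  · refine lt_of_le_of_lt (Cardinal.mk_union_le _ _) (Cardinal.add_lt_of_lt hinf ?_ hF)
    calc #(F * (H : Set G) : Set G) ≤ #F * #(H : Set G) := by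
          rw [← Set.image2_mul]; exact Cardinal.mk_image2_le
      _ < κ := Cardinal.mul_lt_of_lt hinf hF hHc
  · apply Set.eq_univ_of_univ_subset
    calc (Set.univ : Set G) = F * ((H : Set G) * A i) * F := hFeq.symm
      _ = (F * (H : Set G)) * A i * F := by rw [mul_assoc F (H : Set G) (A i)]
      _ ⊆ (F * (H : Set G) ∪ F) * A i * (F * (H : Set G) ∪ F) :=
          Set.mul_subset_mul (Set.mul_subset_mul_right Set.subset_union_left)
            Set.subset_union_right
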